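/- Global invariance: if H is self-adjoint, U unitary with [U,H]=0, and the transpose (in a fixed basis) satisfies Hᵀ = H and Uᵀ = U, then for any positive semidefinite operators ρ_i, ρ_f on a finite-dimensional Hilbert space, Z̃(ρ_i)·Tr[ρ_f U G_H(ρ_i) U†] = Z̃(ρ_fᵀ)·Tr[ρ_iᵀ U G_H(ρ_fᵀ) U†], where G_H(ρ) = e^{-H/2k_BT}ρe^{-H/2k_BT}/Z̃(ρ) and Z̃(ρ) = Tr[e^{-H/k_BT}ρ]. -/

import Mathlib

open Matrix
open scoped ComplexOrder

/-- Z̃(ρ) = Tr[e^{-H/k_BT} ρ]. -/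
noncomputable def Ztilde {N : ℕ} (kT : ℝ) (H ρ : Matrix (Fin N) (Fin N) ℂ) : ℂ :=
  Matrix.trace (NormedSpace.exp (((-kT⁻¹ : ℝ) : ℂ) • H) * ρ)

/-- The Gibbs map G_H(ρ) = e^{-H/2k_BT} ρ e^{-H/2k_BT} / Z̃(ρ). -/
noncomputable def gibbsMap {N : ℕ} (kT : ℝ) (H ρ : Matrix (Fin N) (Fin N) ℂ) :
    Matrix (Fin N) (Fin N) ℂ :=
  (Ztilde kT H ρ)⁻¹ •
    (NormedSpace.exp (((-(2 * kT)⁻¹ : ℝ) : ℂ) • H) * ρ *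
      NormedSpace.exp (((-(2 * kT)⁻¹ : ℝ) : ℂ) • H))

/-- Global invariance. If H is self-adjoint, U is unitary with [U,H] = 0,
and in a fixed basis Hᵀ = H and Uᵀ = U, then for positive semidefinite ρ_i, ρ_f,
Z̃(ρ_i)·Tr[ρ_f U G_H(ρ_i) U†] = Z̃(ρ_fᵀ)·Tr[ρ_iᵀ U G_H(ρ_fᵀ) U†]. -/
theorem global_invariance {N : ℕ} (kT : ℝ) (hkT : 0 < kT)
    (H U ρi ρf : Matrix (Fin N) (Fin N) ℂ)
    (hH : H.IsHermitian) (hHT : H.transpose = H)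
    (hU : U * Uᴴ = 1 ∧ Uᴴ * U = 1) (hUT : U.transpose = U)
    (hcomm : U * H = H * U)
    (hρi : ρi.PosSemidef) (hρf : ρf.PosSemidef)
    (hZi : Ztilde kT H ρi ≠ 0) (hZf : Ztilde kT H ρf.transpose ≠ 0) :
    Ztilde kT H ρi * Matrix.trace (ρf * U * gibbsMap kT H ρi * Uᴴ)
      = Ztilde kT H ρf.transpose *
          Matrix.trace (ρi.transpose * U * gibbsMap kT H ρf.transpose * Uᴴ) := by
  set c : ℂ := ((-(2 * kT)⁻¹ : ℝ) : ℂ) with hc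
  set E : Matrix (Fin N) (Fin N) ℂ := NormedSpace.exp (c • H) with hE
  -- E commutes with U
  have hcomm' : Commute U (c • H) := Commute.smul_right hcomm c
  have hEU : U * E = E * U := (hcomm'.exp_right)
  -- E is symmetric (Eᵀ = E)
  have hET : Eᵀ = E := by
    rw [hE, ← Matrix.exp_transpose, Matrix.transpose_smul, hHT]
  -- Uᴴ is symmetric
  have hUHT : (Uᴴ)ᵀ = Uᴴ := by
    ext i j
    simp only [Matrix.transpose_apply, Matrix.conjTranspose_apply]
    have h := congrFun (congrFun hUT j) i
    rw [Matrix.transpose_apply] at h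
    exact congrArg star h
  -- E commutes with Uᴴ
  have hEUH : Uᴴ * E = E * Uᴴ := by
    have hEH : Eᴴ = E := by
      rw [hE, ← Matrix.exp_conjTranspose]
      congr 1
      rw [Matrix.conjTranspose_smul, hH.eq]
      congr 1
      simp [hc]
    calc Uᴴ * E = Uᴴ * Eᴴ := by rw [hEH]
      _ = (E * U)ᴴ := by rw [Matrix.conjTranspose_mul]
      _ = (U * E)ᴴ := by rw [hEU]
      _ = Eᴴ * Uᴴ := by rw [Matrix.conjTranspose_mul]
      _ = E * Uᴴ := by rw [hEH]
  -- kill the Z factors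
  have hsimp : ∀ (ρ σ : Matrix (Fin N) (Fin N) ℂ), Ztilde kT H ρ ≠ 0 →
      Ztilde kT H ρ * Matrix.trace (σ * U * gibbsMap kT H ρ * Uᴴ)
        = Matrix.trace (σ * U * (E * ρ * E) * Uᴴ) := by
    intro ρ σ hZ
    rw [gibbsMap, ← hc, ← hE, Matrix.mul_smul, Matrix.smul_mul, Matrix.trace_smul,
      smul_eq_mul, ← mul_assoc, mul_inv_cancel₀ hZ, one_mul]
  rw [hsimp ρi ρf hZi, hsimp ρf.transpose ρi.transpose hZf]
  -- now prove the trace identity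
  rw [← Matrix.trace_transpose (ρf * U * (E * ρi * E) * Uᴴ)]
  simp only [Matrix.transpose_mul, hET, hUT, hUHT]
  -- LHS: trace (Uᴴ * (E * ρiᵀ * E * (U * ρfᵀ)))   (some association)
  -- normalize associativity
  simp only [mul_assoc]
  -- cycle: move leading Uᴴ * E to the end
  rw [show Uᴴ * (E * (ρiᵀ * (E * (U * ρfᵀ)))) = (Uᴴ * E) * (ρiᵀ * (E * (U * ρfᵀ))) by
    rw [mul_assoc]]
  rw [Matrix.trace_mul_comm]
  rw [hEUH]
  -- goal: trace (ρiᵀ * (E * (U * ρfᵀ)) * (E * Uᴴ)) = trace (ρiᵀ * (U * (E * (ρfᵀ * (E * Uᴴ)))))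
  simp only [mul_assoc]
  congr 1
  rw [show E * (U * (ρfᵀ * (E * Uᴴ))) = (E * U) * (ρfᵀ * (E * Uᴴ)) by rw [mul_assoc],
    ← hEU]
  simp [mul_assoc]
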